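/- Let N ≥ 2, ℓ_1,...,ℓ_N > 0, τ > 0 with sin(τℓ_j) ≠ 0 for all j and ∑_j cot(τℓ_j) = 0, ρ = (∑_j ℓ_j/sin²(τℓ_j))^{-1}, and γ_0 = 1/(16eN). Then for every z ∈ ℂ with |z − τ| ≤ γ_0 ρ one has |ψ_0''(z)| ≤ (16e/ρ^{3/2}) ∑_{j=1}^N √ℓ_j, where ψ_0(z) = −∑_j cot(zℓ_j). -/

import Mathlib

open Complex Real Finset

lemma abs_cos_le_exp_abs_im (w : ℂ) : ‖(Complex.cos w)‖ ≤ Real.exp |w.im| := by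
  have h1 : ‖(Complex.exp (w * I))‖ ≤ Real.exp |w.im| := by
    rw [Complex.norm_exp]
    exact Real.exp_le_exp.2 (by simp [neg_le_abs])
  have h2 : ‖(Complex.exp (-w * I))‖ ≤ Real.exp |w.im| := by
    rw [Complex.norm_exp]
    exact Real.exp_le_exp.2 (by simp [le_abs_self])
  calc ‖(Complex.cos w)‖
      = ‖(Complex.exp (w * I) + Complex.exp (-w * I))‖ / 2 := by
        rw [Complex.cos, norm_div, Complex.norm_two]
    _ ≤ (‖(Complex.exp (w * I))‖ + ‖(Complex.exp (-w * I))‖) / 2 := by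
        gcongr; exact norm_add_le _ _
    _ ≤ (Real.exp |w.im| + Real.exp |w.im|) / 2 := by gcongr
    _ = Real.exp |w.im| := by ring

/-- Bound on the second derivative of the secular function:
`|ψ₀''(z)| = |−2∑ ℓ_j² cos(zℓ_j)/sin(zℓ_j)³| ≤ (16e/ρ^{3/2}) ∑ √ℓ_j`
on the disk `D(τ, γ₀ ρ)`. -/
theorem psi0_second_derivative_bound (N : ℕ) (hN : 2 ≤ N)
    (ℓ : Fin N → ℝ) (hℓ : ∀ j, 0 < ℓ j)
    (τ : ℝ) (hτ : 0 < τ) (hsin : ∀ j, Real.sin (τ * ℓ j) ≠ 0)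
    (hzero : ∑ j : Fin N, Real.cot (τ * ℓ j) = 0)
    (ρ : ℝ) (hρ : ρ = (∑ j : Fin N, ℓ j / Real.sin (τ * ℓ j) ^ 2)⁻¹)
    (z : ℂ) (hz : ‖(z - (τ : ℂ))‖ ≤ (1 / (16 * Real.exp 1 * N)) * ρ) :
    ‖(-2 * ∑ j : Fin N,
        ((ℓ j : ℂ) ^ 2 * Complex.cos (z * (ℓ j : ℂ)) / Complex.sin (z * (ℓ j : ℂ)) ^ 3))‖
      ≤ (16 * Real.exp 1 / ρ ^ ((3 : ℝ) / 2)) * ∑ j : Fin N, Real.sqrt (ℓ j) := by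
  have hNe : Nonempty (Fin N) := ⟨⟨0, by omega⟩⟩
  have he1 : (1 : ℝ) ≤ Real.exp 1 := Real.one_le_exp (by norm_num)
  have hepos : (0 : ℝ) < Real.exp 1 := Real.exp_pos 1
  have hNge : (2 : ℝ) ≤ N := by exact_mod_cast hN
  have hNpos : (0 : ℝ) < N := by linarith
  -- positivity of the sum S and of ρ
  set S : ℝ := ∑ j : Fin N, ℓ j / Real.sin (τ * ℓ j) ^ 2 with hS
  have hterm : ∀ j : Fin N, 0 < ℓ j / Real.sin (τ * ℓ j) ^ 2 := fun j =>
    div_pos (hℓ j) (pow_two_pos_of_ne_zero (hsin j))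
  have hSpos : 0 < S := Finset.sum_pos (fun j _ => hterm j) univ_nonempty
  have hρpos : 0 < ρ := hρ ▸ inv_pos.2 hSpos
  -- per-index facts
  have hLρ : ∀ j : Fin N, ℓ j * ρ ≤ Real.sin (τ * ℓ j) ^ 2 := by
    intro j
    have h1 : ℓ j / Real.sin (τ * ℓ j) ^ 2 ≤ S :=
      Finset.single_le_sum (fun i _ => (hterm i).le) (mem_univ j)
    have hsq : 0 < Real.sin (τ * ℓ j) ^ 2 := pow_two_pos_of_ne_zero (hsin j)
    have h2 : ℓ j ≤ S * Real.sin (τ * ℓ j) ^ 2 := (div_le_iff₀ hsq).1 h1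
    rw [hρ, mul_inv_le_iff₀ hSpos]
    linarith
  have hLρ1 : ∀ j : Fin N, ℓ j * ρ ≤ 1 := fun j =>
    (hLρ j).trans (Real.sin_sq_le_one _)
  have hLρpos : ∀ j : Fin N, 0 < ℓ j * ρ := fun j => mul_pos (hℓ j) hρpos
  -- radius
  set r : ℝ := 1 / (16 * Real.exp 1 * N) * ρ with hr
  have hrpos : 0 < r := by positivity
  -- sin lower bound on the disk
  have hsinlow : ∀ j : Fin N,
      Real.sqrt (ℓ j * ρ) / 2 ≤ ‖(Complex.sin (z * (ℓ j : ℂ)))‖ := by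
    intro j
    set L := ℓ j with hLdef
    set Lc : ℂ := (L : ℂ) with hLc
    have hLpos : 0 < L := hℓ j
    set sb : Set ℂ := Metric.closedBall (τ : ℂ) r with hsset
    have hzs : z ∈ sb := by
      rw [hsset, Metric.mem_closedBall, Complex.dist_eq]
      exact hz
    have hτs : (τ : ℂ) ∈ sb := Metric.mem_closedBall_self hrpos.le
    have hderiv : ∀ w ∈ sb, HasDerivWithinAt (fun w : ℂ => Complex.sin (w * Lc))
        (Complex.cos (w * Lc) * Lc) sb w := by
      intro w _
      have h := (Complex.hasDerivAt_sin (w * Lc)).comp w ((hasDerivAt_id w).mul_const Lc)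
      exact ((hasDerivAt_mul_const (x := w) Lc).csin).hasDerivWithinAt
    have hbound : ∀ w ∈ sb, ‖Complex.cos (w * Lc) * Lc‖ ≤ Real.exp 1 * L := by
      intro w hw
      rw [hsset, Metric.mem_closedBall, Complex.dist_eq] at hw
      have him : |w.im| ≤ r := by
        have h1 := Complex.abs_im_le_norm (w - (τ : ℂ))
        simp only [Complex.sub_im, Complex.ofReal_im, sub_zero] at h1
        exact h1.trans hw
      have himL : |(w * Lc).im| ≤ r * L := by
        have h2 : (w * Lc).im = w.im * L := by simp [hLc]
        rw [h2, abs_mul, abs_of_pos hLpos]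
        exact mul_le_mul_of_nonneg_right him hLpos.le
      have hrL : r * L ≤ 1 := by
        have h1 : r * L = 1 / (16 * Real.exp 1 * N) * (L * ρ) := by rw [hr]; ring
        have h2 : 1 / (16 * Real.exp 1 * N) ≤ 1 := by
          rw [div_le_one (by positivity)]
          nlinarith
        calc r * L = 1 / (16 * Real.exp 1 * N) * (L * ρ) := h1
          _ ≤ 1 * 1 := mul_le_mul h2 (hLρ1 j) (hLρpos j).le zero_le_one
          _ = 1 := by ring
      have hcos : ‖(Complex.cos (w * Lc))‖ ≤ Real.exp 1 :=
        (abs_cos_le_exp_abs_im _).trans (Real.exp_le_exp.2 (himL.trans hrL))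
      calc ‖Complex.cos (w * Lc) * Lc‖
          = ‖(Complex.cos (w * Lc))‖ * L := by
            rw [norm_mul]
            simp [hLc, abs_of_pos hLpos]
        _ ≤ Real.exp 1 * L := mul_le_mul_of_nonneg_right hcos hLpos.le
    have hmvt : ‖Complex.sin (z * Lc) - Complex.sin ((τ : ℂ) * Lc)‖
        ≤ Real.exp 1 * L * ‖z - (τ : ℂ)‖ :=
      Convex.norm_image_sub_le_of_norm_hasDerivWithin_le hderiv hbound
        (convex_closedBall _ _) hτs hzs
    have hdiff : ‖(Complex.sin (z * Lc) - Complex.sin ((τ : ℂ) * Lc))‖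
        ≤ L * ρ / (16 * N) := by
      calc ‖(Complex.sin (z * Lc) - Complex.sin ((τ : ℂ) * Lc))‖
          ≤ Real.exp 1 * L * ‖z - (τ : ℂ)‖ := hmvt
        _ ≤ Real.exp 1 * L * r := by
            apply mul_le_mul_of_nonneg_left _ (by positivity)
            exact hz
        _ = L * ρ / (16 * N) := by
            rw [hr]; field_simp
    have hsinτ : ‖(Complex.sin ((τ : ℂ) * Lc))‖ = |Real.sin (τ * L)| := by
      rw [show ((τ : ℂ) * Lc) = ((τ * L : ℝ) : ℂ) by push_cast [hLc]; ring,
        ← Complex.ofReal_sin, Complex.norm_real, Real.norm_eq_abs]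
    have hsqrt : Real.sqrt (L * ρ) ≤ |Real.sin (τ * L)| := by
      rw [← Real.sqrt_sq_eq_abs]
      exact Real.sqrt_le_sqrt (hLρ j)
    have hsmall : L * ρ / (16 * N) ≤ Real.sqrt (L * ρ) / 2 := by
      have h1 : L * ρ ≤ Real.sqrt (L * ρ) := by
        nlinarith [Real.sq_sqrt (hLρpos j).le, Real.sqrt_le_one.2 (hLρ1 j),
          Real.sqrt_nonneg (L * ρ)]
      have h16N : (2 : ℝ) ≤ 16 * N := by linarith
      calc L * ρ / (16 * N) ≤ Real.sqrt (L * ρ) / (16 * N) := by gcongr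
          _ ≤ Real.sqrt (L * ρ) / 2 := by gcongr
    have htri : ‖(Complex.sin ((τ : ℂ) * Lc))‖
        - ‖(Complex.sin (z * Lc) - Complex.sin ((τ : ℂ) * Lc))‖
        ≤ ‖(Complex.sin (z * Lc))‖ := by
      have h := norm_sub_norm_le (Complex.sin ((τ : ℂ) * Lc)) (Complex.sin (z * Lc))
      rw [norm_sub_rev] at h
      linarith
    linarith
  -- cos upper bound on the disk
  have hcosup : ∀ j : Fin N,
      ‖(Complex.cos (z * (ℓ j : ℂ)))‖ ≤ Real.exp 1 := by
    intro j
    have hLpos : 0 < ℓ j := hℓ j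
    have him : |z.im| ≤ r := by
      have h1 := Complex.abs_im_le_norm (z - (τ : ℂ))
      simp only [Complex.sub_im, Complex.ofReal_im, sub_zero] at h1
      exact h1.trans hz
    have himL : |(z * (ℓ j : ℂ)).im| ≤ r * ℓ j := by
      have h2 : (z * (ℓ j : ℂ)).im = z.im * ℓ j := by simp
      rw [h2, abs_mul, abs_of_pos hLpos]
      exact mul_le_mul_of_nonneg_right him hLpos.le
    have hrL : r * ℓ j ≤ 1 := by
      have h1 : r * ℓ j = 1 / (16 * Real.exp 1 * N) * (ℓ j * ρ) := by rw [hr]; ring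
      have h2 : 1 / (16 * Real.exp 1 * N) ≤ 1 := by
        rw [div_le_one (by positivity)]
        nlinarith
      calc r * ℓ j = 1 / (16 * Real.exp 1 * N) * (ℓ j * ρ) := h1
        _ ≤ 1 * 1 := mul_le_mul h2 (hLρ1 j) (hLρpos j).le zero_le_one
        _ = 1 := by ring
    exact (abs_cos_le_exp_abs_im _).trans (Real.exp_le_exp.2 (himL.trans hrL))
  -- per-term bound
  have hsqρ : Real.sqrt ρ > 0 := Real.sqrt_pos.2 hρpos
  have hterm_bd : ∀ j : Fin N,
      ‖((ℓ j : ℂ) ^ 2 * Complex.cos (z * (ℓ j : ℂ)) / Complex.sin (z * (ℓ j : ℂ)) ^ 3)‖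
        ≤ 8 * Real.exp 1 / (ρ * Real.sqrt ρ) * Real.sqrt (ℓ j) := by
    intro j
    have hLpos : 0 < ℓ j := hℓ j
    set sj : ℝ := Real.sqrt (ℓ j * ρ) with hsj
    have hsjpos : 0 < sj := Real.sqrt_pos.2 (hLρpos j)
    have hsinpos : 0 < ‖(Complex.sin (z * (ℓ j : ℂ)))‖ :=
      lt_of_lt_of_le (by positivity) (hsinlow j)
    have habs : ‖((ℓ j : ℂ) ^ 2 * Complex.cos (z * (ℓ j : ℂ))
        / Complex.sin (z * (ℓ j : ℂ)) ^ 3)‖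
        = ℓ j ^ 2 * ‖(Complex.cos (z * (ℓ j : ℂ)))‖
          / ‖(Complex.sin (z * (ℓ j : ℂ)))‖ ^ 3 := by
      rw [norm_div, norm_mul, norm_pow, norm_pow, Complex.norm_real, Real.norm_eq_abs, abs_of_pos hLpos]
    rw [habs]
    have hstep : ℓ j ^ 2 * ‖(Complex.cos (z * (ℓ j : ℂ)))‖
          / ‖(Complex.sin (z * (ℓ j : ℂ)))‖ ^ 3
        ≤ ℓ j ^ 2 * Real.exp 1 / (sj / 2) ^ 3 := by
      apply div_le_div₀ (by positivity)
        (mul_le_mul_of_nonneg_left (hcosup j) (by positivity)) (by positivity)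
      exact pow_le_pow_left₀ (by positivity) (hsinlow j) 3
    refine hstep.trans (le_of_eq ?_)
    have hsj2 : sj ^ 2 = ℓ j * ρ := Real.sq_sqrt (hLρpos j).le
    have hsjmul : sj = Real.sqrt (ℓ j) * Real.sqrt ρ := Real.sqrt_mul hLpos.le ρ
    have hsqL : Real.sqrt (ℓ j) * Real.sqrt (ℓ j) = ℓ j := Real.mul_self_sqrt hLpos.le
    have hsqLpos : 0 < Real.sqrt (ℓ j) := Real.sqrt_pos.2 hLpos
    have h3 : (sj / 2) ^ 3 = (ℓ j * ρ) * (Real.sqrt (ℓ j) * Real.sqrt ρ) / 8 := by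
      have : sj ^ 3 = sj ^ 2 * sj := by ring
      rw [div_pow, this, hsj2, hsjmul]
      ring
    rw [h3]
    field_simp
    linear_combination (-1 : ℝ) * hsqL
  -- assemble
  have hrpoweq : ρ ^ ((3 : ℝ) / 2) = ρ * Real.sqrt ρ := by
    rw [show (3 : ℝ) / 2 = 1 + 1 / 2 by norm_num, Real.rpow_add hρpos, Real.rpow_one,
      Real.sqrt_eq_rpow]
  calc ‖(-2 * ∑ j : Fin N,
        ((ℓ j : ℂ) ^ 2 * Complex.cos (z * (ℓ j : ℂ)) / Complex.sin (z * (ℓ j : ℂ)) ^ 3))‖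
      = 2 * ‖(∑ j : Fin N,
        ((ℓ j : ℂ) ^ 2 * Complex.cos (z * (ℓ j : ℂ)) / Complex.sin (z * (ℓ j : ℂ)) ^ 3))‖ := by
        rw [norm_mul]
        norm_num
    _ ≤ 2 * ∑ j : Fin N, ‖
        ((ℓ j : ℂ) ^ 2 * Complex.cos (z * (ℓ j : ℂ)) / Complex.sin (z * (ℓ j : ℂ)) ^ 3)‖ := by
        gcongr
        exact norm_sum_le _ _
    _ ≤ 2 * ∑ j : Fin N, 8 * Real.exp 1 / (ρ * Real.sqrt ρ) * Real.sqrt (ℓ j) := by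
        gcongr with j
        exact hterm_bd j
    _ = 16 * Real.exp 1 / (ρ * Real.sqrt ρ) * ∑ j : Fin N, Real.sqrt (ℓ j) := by
        rw [← Finset.mul_sum]
        ring
    _ = (16 * Real.exp 1 / ρ ^ ((3 : ℝ) / 2)) * ∑ j : Fin N, Real.sqrt (ℓ j) := by
        rw [hrpoweq]
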